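/- arXiv:1904.08037 — 6 statements merged into one kernel-verified Lean document; each statement's English description precedes it below -/
import Mathlib

section
/- Let V, A, deg, D, M be as in the lazy random walk setting, let t₀ be a nonnegative integer and ε > 0. For a vertex u define Z_u := {v ∈ V : ρ_t^v(u) ≥ 2ε for at least one integer t ∈ [0, t₀]}. Then Vol(Z_u) ≤ (t₀+1)/(2ε), and for any two vertices u₁, u₂, Vol(Z_{u₁} ∪ Z_{u₂}) ≤ (t₀+1)/ε. -/
open Finset Matrix

open scoped Classical in
/-- In the lazy random walk setting, let `t₀ ≥ 0` and `ε > 0`. For a vertex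
`u` define `Z_u := {v : ρ_t^v(u) ≥ 2ε for some integer t ∈ [0, t₀]}` (note
`ρ_t^v(u) = (M^t χ_v)(u)/deg u = (M^t) u v / deg u`). Then `Vol(Z_u) ≤ (t₀+1)/(2ε)`, and for
any two vertices `u₁, u₂`, `Vol(Z_{u₁} ∪ Z_{u₂}) ≤ (t₀+1)/ε`. -/
theorem volume_of_nibble_influence_sets
    {V : Type*} [Fintype V] [DecidableEq V] [Nonempty V]
    (A : Matrix V V ℝ) (hsymm : A.IsSymm) (hnonneg : ∀ u v, 0 ≤ A u v)
    (deg : V → ℝ) (hdeg : ∀ v, deg v = ∑ u, A u v) (hpos : ∀ v, 0 < deg v)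
    (M : Matrix V V ℝ)
    (hM : M = (1 / 2 : ℝ) • (A * Matrix.diagonal (fun v => (deg v)⁻¹) + 1))
    (t₀ : ℕ) (ε : ℝ) (hε : 0 < ε)
    (Z : V → Finset V)
    (hZ : ∀ u, Z u = Finset.univ.filter (fun v => ∃ t ≤ t₀, 2 * ε ≤ (M ^ t) u v / deg u)) :
    (∀ u : V, ∑ v ∈ Z u, deg v ≤ (t₀ + 1) / (2 * ε)) ∧
    (∀ u₁ u₂ : V, ∑ v ∈ Z u₁ ∪ Z u₂, deg v ≤ (t₀ + 1) / ε) := by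
  have hAsymm : ∀ u v, A u v = A v u := fun u v => by
    have := hsymm; rw [Matrix.IsSymm] at this
    conv_lhs => rw [← this]
    rfl
  -- entries of M
  have hMapp : ∀ u v, M u v = (1/2 : ℝ) * (A u v * (deg v)⁻¹ + (if u = v then 1 else 0)) := by
    intro u v
    rw [hM]
    simp [Matrix.smul_apply, Matrix.add_apply, Matrix.mul_diagonal, Matrix.one_apply]
  -- M entries nonneg
  have hMnn : ∀ u v, 0 ≤ M u v := by
    intro u v
    rw [hMapp]
    have h1 : 0 ≤ A u v * (deg v)⁻¹ :=
      mul_nonneg (hnonneg u v) (inv_nonneg.2 (hpos v).le)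
    positivity
  have hMpownn : ∀ t u v, 0 ≤ (M ^ t) u v := by
    intro t
    induction t with
    | zero => intro u v; simp [Matrix.one_apply]; positivity
    | succ n ih =>
      intro u v
      rw [pow_succ, Matrix.mul_apply]
      exact Finset.sum_nonneg fun w _ => mul_nonneg (ih u w) (hMnn w v)
  -- column sums of M are 1
  have hcolM : ∀ v, ∑ u, M u v = 1 := by
    intro v
    have : ∑ u, M u v = (1/2 : ℝ) * ((∑ u, A u v) * (deg v)⁻¹ + 1) := by
      simp only [hMapp]
      rw [← Finset.mul_sum, Finset.sum_add_distrib, Finset.sum_ite_eq' Finset.univ v]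
      simp [← Finset.sum_mul]
    rw [this, ← hdeg, mul_inv_cancel₀ (hpos v).ne']
    norm_num
  have hcol : ∀ t v, ∑ u, (M ^ t) u v = 1 := by
    intro t
    induction t with
    | zero => intro v; simp [Matrix.one_apply]
    | succ n ih =>
      intro v
      calc ∑ u, (M ^ (n+1)) u v = ∑ u, ∑ w, M u w * (M ^ n) w v := by
            simp [pow_succ', Matrix.mul_apply]
        _ = ∑ w, (∑ u, M u w) * (M ^ n) w v := by
            rw [Finset.sum_comm]; simp [Finset.sum_mul]
        _ = 1 := by simp [hcolM, ih]
  -- reversibility of M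
  have hrevM : ∀ u v, M u v * deg v = M v u * deg u := by
    intro u v
    rw [hMapp, hMapp]
    by_cases h : u = v
    · subst h; ring
    · have h' : ¬ v = u := fun hh => h hh.symm
      simp only [h, h', if_false, add_zero]
      rw [hAsymm u v]
      have h1 : (deg v)⁻¹ * deg v = 1 := inv_mul_cancel₀ (hpos v).ne'
      have h2 : (deg u)⁻¹ * deg u = 1 := inv_mul_cancel₀ (hpos u).ne'
      linear_combination (A v u / 2) * h1 - (A v u / 2) * h2
  have hrev : ∀ t u v, (M ^ t) u v * deg v = (M ^ t) v u * deg u := by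
    intro t
    induction t with
    | zero =>
      intro u v
      by_cases h : u = v
      · subst h; rfl
      · have h2 : v ≠ u := fun hh => h hh.symm
        simp [Matrix.one_apply, h, h2]
    | succ n ih =>
      intro u v
      calc (M ^ (n+1)) u v * deg v = ∑ w, M u w * ((M ^ n) w v * deg v) := by
            rw [pow_succ', Matrix.mul_apply, Finset.sum_mul]
            exact Finset.sum_congr rfl fun w _ => by ring
        _ = ∑ w, (M ^ n) v w * (M u w * deg w) := by
            refine Finset.sum_congr rfl fun w _ => ?_
            rw [ih w v]; ring
        _ = ∑ w, (M ^ n) v w * (M w u * deg u) := by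
            refine Finset.sum_congr rfl fun w _ => ?_
            rw [hrevM u w]
        _ = (M ^ (n+1)) v u * deg u := by
            rw [pow_succ, Matrix.mul_apply, Finset.sum_mul]
            exact Finset.sum_congr rfl fun w _ => by ring
  -- main bound
  have key : ∀ u : V, ∑ v ∈ Z u, deg v ≤ (t₀ + 1) / (2 * ε) := by
    intro u
    have hch : ∀ v ∈ Z u, ∃ t, t ≤ t₀ ∧ 2 * ε ≤ (M ^ t) u v / deg u := by
      intro v hv
      rw [hZ u, Finset.mem_filter] at hv
      obtain ⟨t, ht, h2⟩ := hv.2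
      exact ⟨t, ht, h2⟩
    choose! t ht h2 using hch
    have hbd : ∀ v ∈ Z u, deg v ≤ (M ^ (t v)) v u / (2 * ε) := by
      intro v hv
      have h2' := h2 v hv
      have hu := hpos u
      have hv' := hpos v
      have : 2 * ε * deg u ≤ (M ^ (t v)) u v := by
        rw [le_div_iff₀ hu] at h2'
        linarith [h2']
      have hmul : 2 * ε * deg u * deg v ≤ (M ^ (t v)) u v * deg v :=
        mul_le_mul_of_nonneg_right this hv'.le
      rw [hrev (t v) u v] at hmul
      rw [le_div_iff₀ (by positivity : (0:ℝ) < 2 * ε)]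
      calc deg v * (2 * ε) = 2 * ε * deg v := by ring
        _ ≤ (M ^ (t v)) v u := by
          have h3 : 2 * ε * deg u * deg v ≤ (M ^ (t v)) v u * deg u := hmul
          nlinarith [hpos u, hpos v]
    calc ∑ v ∈ Z u, deg v ≤ ∑ v ∈ Z u, (M ^ (t v)) v u / (2 * ε) :=
          Finset.sum_le_sum hbd
      _ = (∑ v ∈ Z u, (M ^ (t v)) v u) / (2 * ε) := by rw [Finset.sum_div]
      _ ≤ (t₀ + 1) / (2 * ε) := by
          apply div_le_div_of_nonneg_right ?_ ?_ |>.trans_eq rfl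
          rotate_left
          · positivity
          have hmaps : ∀ v ∈ Z u, t v ∈ Finset.range (t₀ + 1) := fun v hv =>
            Finset.mem_range.2 (Nat.lt_succ_of_le (ht v hv))
          have hfib := Finset.sum_fiberwise_of_maps_to hmaps
            (fun v => (M ^ (t v)) v u)
          rw [← hfib]
          have : ∀ s ∈ Finset.range (t₀ + 1),
              ∑ v ∈ (Z u).filter (fun v => t v = s), (M ^ (t v)) v u ≤ 1 := by
            intro s _
            calc ∑ v ∈ (Z u).filter (fun v => t v = s), (M ^ (t v)) v u
                = ∑ v ∈ (Z u).filter (fun v => t v = s), (M ^ s) v u := by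
                  refine Finset.sum_congr rfl fun v hv => ?_
                  rw [(Finset.mem_filter.1 hv).2]
              _ ≤ ∑ v, (M ^ s) v u := by
                  apply Finset.sum_le_sum_of_subset_of_nonneg (Finset.subset_univ _)
                  intro v _ _; exact hMpownn s v u
              _ = 1 := hcol s u
          calc ∑ s ∈ Finset.range (t₀ + 1), ∑ v ∈ (Z u).filter (fun v => t v = s),
                (M ^ (t v)) v u ≤ ∑ s ∈ Finset.range (t₀ + 1), (1:ℝ) :=
                Finset.sum_le_sum this
            _ = t₀ + 1 := by simp
  refine ⟨key, fun u₁ u₂ => ?_⟩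
  have h1 := key u₁
  have h2 := key u₂
  have hint : 0 ≤ ∑ v ∈ Z u₁ ∩ Z u₂, deg v :=
    Finset.sum_nonneg fun v _ => (hpos v).le
  have hunion : ∑ v ∈ Z u₁ ∪ Z u₂, deg v + ∑ v ∈ Z u₁ ∩ Z u₂, deg v
      = ∑ v ∈ Z u₁, deg v + ∑ v ∈ Z u₂, deg v := Finset.sum_union_inter
  have : ∑ v ∈ Z u₁ ∪ Z u₂, deg v ≤ (t₀ + 1) / (2 * ε) + (t₀ + 1) / (2 * ε) := by
    nlinarith [hunion]
  calc ∑ v ∈ Z u₁ ∪ Z u₂, deg v ≤ (t₀ + 1) / (2 * ε) + (t₀ + 1) / (2 * ε) := this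
    _ = (t₀ + 1) / ε := by field_simp; ring
end

section
/- Let G be a finite simple graph with vertex set V, let φ > 0, and let A ⊆ B ⊆ V be vertex sets satisfying |∂A| ≤ φ·Vol(A), Vol(B) ≤ (1+φ)·Vol(A), and Vol(B) ≤ Vol(V)/2. Then |∂B| ≤ 2φ·Vol(B); in particular, if Vol(B) > 0 then the conductance of the cut B satisfies Φ(B) ≤ 2φ. -/
open Finset

/-- The volume of a vertex set: the sum of the degrees (in `G`) of its vertices. -/
def gvol {V : Type*} [Fintype V] (G : SimpleGraph V) [DecidableRel G.Adj]
    (S : Finset V) : ℕ :=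
  ∑ v ∈ S, G.degree v

/-- The number of edges of `G` with one endpoint in `S` and the other in `T`
(for disjoint `S`, `T`, counted as ordered pairs `(s, t) ∈ S × T` with `s ~ t`). -/
def gcut {V : Type*} [Fintype V] [DecidableEq V] (G : SimpleGraph V) [DecidableRel G.Adj]
    (S T : Finset V) : ℕ :=
  ((S ×ˢ T).filter fun p => G.Adj p.1 p.2).card

lemma gcut_eq_sum {V : Type*} [Fintype V] [DecidableEq V] (G : SimpleGraph V)
    [DecidableRel G.Adj] (S T : Finset V) :
    gcut G S T = ∑ s ∈ S, (T.filter (G.Adj s)).card := by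
  unfold gcut
  rw [Finset.card_filter, Finset.sum_product]
  exact Finset.sum_congr rfl fun s _ => by rw [Finset.card_filter]

lemma filter_card_le_degree {V : Type*} [Fintype V] [DecidableEq V] (G : SimpleGraph V)
    [DecidableRel G.Adj] (T : Finset V) (s : V) :
    (T.filter (G.Adj s)).card ≤ G.degree s := by
  rw [← SimpleGraph.card_neighborFinset_eq_degree, SimpleGraph.neighborFinset]
  apply Finset.card_le_card
  intro t ht
  simp only [Finset.mem_filter] at ht
  simpa using ht.2

/-- Let `G` be a finite simple graph, `φ > 0`, and `A ⊆ B` vertex sets with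
`|∂A| ≤ φ·Vol(A)`, `Vol(B) ≤ (1+φ)·Vol(A)`, and `Vol(B) ≤ Vol(V)/2`. Then
`|∂B| ≤ 2φ·Vol(B)`; in particular, if `Vol(B) > 0` then the conductance
`Φ(B) = |∂B| / min(Vol B, Vol Bᶜ)` satisfies `Φ(B) ≤ 2φ`. -/
theorem boundary_of_slightly_larger_set_small_side
    {V : Type*} [Fintype V] [DecidableEq V] (G : SimpleGraph V) [DecidableRel G.Adj]
    (φ : ℝ) (hφ : 0 < φ) (A B : Finset V) (hAB : A ⊆ B)
    (hbA : (gcut G A Aᶜ : ℝ) ≤ φ * gvol G A)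
    (hvolB : (gvol G B : ℝ) ≤ (1 + φ) * gvol G A)
    (hhalf : (gvol G B : ℝ) ≤ (gvol G Finset.univ : ℝ) / 2) :
    (gcut G B Bᶜ : ℝ) ≤ 2 * φ * gvol G B ∧
    (0 < gvol G B →
      (gcut G B Bᶜ : ℝ) / min (gvol G B : ℝ) (gvol G Bᶜ : ℝ) ≤ 2 * φ) := by
  -- volume additivity
  have hvolsplit : gvol G A + gvol G (B \ A) = gvol G B := by
    unfold gvol
    rw [← Finset.sum_union (Finset.disjoint_sdiff), Finset.union_sdiff_of_subset hAB]
  have hvoluniv : gvol G B + gvol G Bᶜ = gvol G Finset.univ := by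
    unfold gvol
    exact Finset.sum_add_sum_compl B _
  -- key counting inequality in ℕ
  have hkey : gcut G B Bᶜ ≤ gcut G A Aᶜ + gvol G (B \ A) := by
    rw [gcut_eq_sum, gcut_eq_sum, ← Finset.sum_sdiff hAB]
    have h1 : ∑ s ∈ B \ A, (Bᶜ.filter (G.Adj s)).card ≤ gvol G (B \ A) :=
      Finset.sum_le_sum fun s _ => filter_card_le_degree G _ s
    have h2 : ∑ s ∈ A, (Bᶜ.filter (G.Adj s)).card ≤ ∑ s ∈ A, (Aᶜ.filter (G.Adj s)).card :=
      Finset.sum_le_sum fun s _ => Finset.card_le_card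
        (Finset.filter_subset_filter _ (Finset.compl_subset_compl.2 hAB))
    omega
  -- cast to ℝ
  have hkeyR : (gcut G B Bᶜ : ℝ) ≤ gcut G A Aᶜ + (gvol G B - gvol G A) := by
    have h1 : (gvol G (B \ A) : ℝ) = gvol G B - gvol G A := by
      have := hvolsplit
      push_cast [← this]
      ring
    have := (Nat.cast_le (α := ℝ)).2 hkey
    push_cast at this
    linarith [h1]
  have hvolA_le : (gvol G A : ℝ) ≤ gvol G B := by
    have := hvolsplit
    have : gvol G A ≤ gvol G B := by omega
    exact_mod_cast this
  have hmain : (gcut G B Bᶜ : ℝ) ≤ 2 * φ * gvol G B := by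
    nlinarith [hbA, hvolB, hkeyR, hvolA_le, hφ.le]
  refine ⟨hmain, fun hpos => ?_⟩
  have hposR : (0 : ℝ) < gvol G B := by exact_mod_cast hpos
  have hmin : min (gvol G B : ℝ) (gvol G Bᶜ : ℝ) = gvol G B := by
    apply min_eq_left
    have h : (gvol G B : ℝ) + gvol G Bᶜ = gvol G Finset.univ := by exact_mod_cast hvoluniv
    linarith
  rw [hmin, div_le_iff₀ hposR]
  linarith [hmain]
end

section
/- Let G be a finite simple graph with vertex set V, let φ > 0, let w ≥ 1 be an integer, and let C_1, …, C_k ⊆ V with C := C_1 ∪ … ∪ C_k. Suppose that (i) |∂C_i| ≤ 12φ·Vol(C_i) for every i, (ii) every edge of G having an endpoint in C has an endpoint in at most w of the sets C_1, …, C_k, and (iii) Vol(C) ≤ (23/24)·Vol(V). Then Σ_{i=1}^k Vol(C_i) ≤ w·Vol(C), |∂C| ≤ 12wφ·Vol(C), and |∂C| ≤ 276wφ·min(Vol(C), Vol(V∖C)); in particular, if C is a nonempty proper subset of V then Φ(C) ≤ 276wφ. -/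
open Finset

/-- Let `φ > 0`, `w ≥ 1` an integer, and `C₁, …, C_k ⊆ V` with
`C = C₁ ∪ ⋯ ∪ C_k`. Suppose (i) `|∂Cᵢ| ≤ 12φ·Vol(Cᵢ)` for every `i`, (ii) every edge of `G`
having an endpoint in `C` has an endpoint in at most `w` of the sets `Cᵢ`, and
(iii) `Vol(C) ≤ (23/24)·Vol(V)`. Then `∑ᵢ Vol(Cᵢ) ≤ w·Vol(C)`, `|∂C| ≤ 12wφ·Vol(C)`,
`|∂C| ≤ 276wφ·min(Vol C, Vol Cᶜ)`; in particular, if `C` is a nonempty proper subset of `V`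
then `Φ(C) ≤ 276wφ`. -/
theorem parallel_nibble_union_conductance
    {V : Type*} [Fintype V] [DecidableEq V] (G : SimpleGraph V) [DecidableRel G.Adj]
    (φ : ℝ) (hφ : 0 < φ) (w : ℕ) (hw : 1 ≤ w)
    (k : ℕ) (Cf : Fin k → Finset V) (C : Finset V)
    (hC : C = Finset.univ.biUnion Cf)
    (hi : ∀ i, (gcut G (Cf i) (Cf i)ᶜ : ℝ) ≤ 12 * φ * gvol G (Cf i))
    (hii : ∀ u v : V, G.Adj u v → (u ∈ C ∨ v ∈ C) →
      ((Finset.univ : Finset (Fin k)).filter fun i => u ∈ Cf i ∨ v ∈ Cf i).card ≤ w)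
    (hiii : (gvol G C : ℝ) ≤ (23 / 24) * gvol G Finset.univ) :
    (∑ i, gvol G (Cf i) ≤ w * gvol G C) ∧
    (gcut G C Cᶜ : ℝ) ≤ 12 * w * φ * gvol G C ∧
    (gcut G C Cᶜ : ℝ) ≤ 276 * w * φ * min (gvol G C : ℝ) (gvol G Cᶜ : ℝ) ∧
    (C.Nonempty → C ≠ Finset.univ →
      (gcut G C Cᶜ : ℝ) / min (gvol G C : ℝ) (gvol G Cᶜ : ℝ) ≤ 276 * w * φ) := by
  -- Part 1: ∑ᵢ Vol(Cᵢ) ≤ w·Vol(C)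
  have hmemC : ∀ {v : V} {i : Fin k}, v ∈ Cf i → v ∈ C := by
    intro v i hv; rw [hC]; exact Finset.mem_biUnion.mpr ⟨i, Finset.mem_univ i, hv⟩
  have hsum : ∑ i, gvol G (Cf i) ≤ w * gvol G C := by
    have h1 : ∑ i, gvol G (Cf i)
        = ∑ v : V, (Finset.univ.filter fun i => v ∈ Cf i).card * G.degree v := by
      simp only [gvol]
      calc ∑ i, ∑ v ∈ Cf i, G.degree v
          = ∑ i : Fin k, ∑ v : V, if v ∈ Cf i then G.degree v else 0 := by
            refine Finset.sum_congr rfl fun i _ => ?_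
            rw [Finset.sum_ite_mem, Finset.univ_inter]
        _ = ∑ v : V, ∑ i : Fin k, if v ∈ Cf i then G.degree v else 0 := Finset.sum_comm
        _ = _ := by
            refine Finset.sum_congr rfl fun v _ => ?_
            rw [← Finset.sum_filter, Finset.sum_const, smul_eq_mul]
    rw [h1]
    have h2 : w * gvol G C = ∑ v : V, (if v ∈ C then w else 0) * G.degree v := by
      simp only [gvol, ite_mul, zero_mul, Finset.sum_ite_mem, Finset.univ_inter,
        Finset.mul_sum]
    rw [h2]
    refine Finset.sum_le_sum fun v _ => ?_
    by_cases hvC : v ∈ C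
    · simp only [hvC, if_true]
      by_cases hd : G.degree v = 0
      · simp [hd]
      · have : 0 < G.degree v := Nat.pos_of_ne_zero hd
        obtain ⟨u, hu⟩ : ∃ u, G.Adj v u := by
          rw [← SimpleGraph.card_neighborFinset_eq_degree] at this
          obtain ⟨u, hu⟩ := Finset.card_pos.mp this
          exact ⟨u, (SimpleGraph.mem_neighborFinset G v u).mp hu⟩
        refine Nat.mul_le_mul_right _ ?_
        calc (Finset.univ.filter fun i => v ∈ Cf i).card
            ≤ (Finset.univ.filter fun i => v ∈ Cf i ∨ u ∈ Cf i).card := by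
              apply Finset.card_le_card
              intro i hi'; simp at hi' ⊢; exact Or.inl hi'
          _ ≤ w := hii v u hu (Or.inl hvC)
    · have : (Finset.univ.filter fun i => v ∈ Cf i) = ∅ := by
        refine Finset.filter_false_of_mem fun i _ hvi => hvC (hmemC hvi)
      simp [this, hvC]
  -- Part 2: |∂C| ≤ ∑ᵢ |∂Cᵢ|
  have hcutsum : gcut G C Cᶜ ≤ ∑ i, gcut G (Cf i) (Cf i)ᶜ := by
    unfold gcut
    calc ((C ×ˢ Cᶜ).filter fun p => G.Adj p.1 p.2).card
        ≤ (Finset.univ.biUnion fun i =>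
            ((Cf i ×ˢ (Cf i)ᶜ).filter fun p => G.Adj p.1 p.2)).card := by
          apply Finset.card_le_card
          intro p hp
          simp only [Finset.mem_filter, Finset.mem_product, Finset.mem_compl] at hp
          obtain ⟨⟨hp1, hp2⟩, hadj⟩ := hp
          rw [hC] at hp1
          obtain ⟨i, _, hpi⟩ := Finset.mem_biUnion.mp hp1
          refine Finset.mem_biUnion.mpr ⟨i, Finset.mem_univ i, ?_⟩
          simp only [Finset.mem_filter, Finset.mem_product, Finset.mem_compl]
          exact ⟨⟨hpi, fun hpi2 => hp2 (hmemC hpi2)⟩, hadj⟩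
      _ ≤ ∑ i, ((Cf i ×ˢ (Cf i)ᶜ).filter fun p => G.Adj p.1 p.2).card :=
          Finset.card_biUnion_le
  have h2 : (gcut G C Cᶜ : ℝ) ≤ 12 * w * φ * gvol G C := by
    calc (gcut G C Cᶜ : ℝ) ≤ ∑ i, (gcut G (Cf i) (Cf i)ᶜ : ℝ) := by
          exact_mod_cast hcutsum
      _ ≤ ∑ i, 12 * φ * gvol G (Cf i) := Finset.sum_le_sum fun i _ => hi i
      _ = 12 * φ * ∑ i, (gvol G (Cf i) : ℝ) := by rw [← Finset.mul_sum]
      _ ≤ 12 * φ * (w * gvol G C) := by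
          have hnn : (0:ℝ) ≤ 12 * φ := by positivity
          have : (∑ i, (gvol G (Cf i) : ℝ)) ≤ (w : ℝ) * gvol G C := by
            exact_mod_cast hsum
          exact mul_le_mul_of_nonneg_left this hnn
      _ = 12 * w * φ * gvol G C := by ring
  -- volumes of complement
  have hcompl : (gvol G C : ℝ) + gvol G Cᶜ = gvol G Finset.univ := by
    exact_mod_cast congrArg (Nat.cast : ℕ → ℝ)
      (Finset.sum_add_sum_compl C (G.degree ·))
  have h23 : (gvol G C : ℝ) ≤ 23 * gvol G Cᶜ := by linarith
  -- Part 3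
  have h3 : (gcut G C Cᶜ : ℝ) ≤ 276 * w * φ * min (gvol G C : ℝ) (gvol G Cᶜ : ℝ) := by
    have hwφ : (0:ℝ) ≤ (w : ℝ) * φ := by positivity
    rcases le_total ((gvol G C : ℝ)) ((gvol G Cᶜ : ℝ)) with h | h
    · rw [min_eq_left h]
      have hvnn : (0:ℝ) ≤ (gvol G C : ℝ) := Nat.cast_nonneg _
      nlinarith [mul_nonneg hwφ hvnn]
    · rw [min_eq_right h]
      nlinarith [mul_nonneg hwφ (by linarith : (0:ℝ) ≤ 23 * gvol G Cᶜ - gvol G C)]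
  refine ⟨hsum, h2, h3, fun _ _ => ?_⟩
  -- Part 4
  set m := min (gvol G C : ℝ) (gvol G Cᶜ : ℝ) with hm
  have hm0 : (0:ℝ) ≤ m := le_min (Nat.cast_nonneg _) (Nat.cast_nonneg _)
  rcases eq_or_lt_of_le hm0 with h0 | h0
  · rw [← h0, div_zero]; positivity
  · rw [div_le_iff₀ h0]; linarith [h3]
end

section
/- For every finite simple graph G = (V, E) with m := |E| ≥ 1 edges and every φ ∈ (0,1), there exists a partition V = V_1 ∪ … ∪ V_x such that: (1) for every part V_i and every subset S ⊆ V_i, |E(S, V_i ∖ S)| ≥ φ·min(Vol(S), Vol(V_i ∖ S)), where volumes are taken with respect to degrees in G; and (2) the number of edges of G whose endpoints lie in different parts is at most 2φ·m·log₂(2m). -/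
open Finset

section Aux
variable {V : Type*} [Fintype V] [DecidableEq V] (G : SimpleGraph V) [DecidableRel G.Adj]

lemma gcut_comm (S T : Finset V) : gcut G S T = gcut G T S := by
  unfold gcut
  apply Finset.card_bij (fun p _ => (p.2, p.1))
  · rintro ⟨a, b⟩ h
    simp only [mem_filter, mem_product] at h ⊢
    exact ⟨⟨h.1.2, h.1.1⟩, h.2.symm⟩
  · rintro ⟨a, b⟩ _ ⟨c, d⟩ _ h
    simp only [Prod.mk.injEq] at h
    simp [h.1, h.2]
  · rintro ⟨a, b⟩ h
    simp only [mem_filter, mem_product] at h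
    exact ⟨(b, a), by simp [h.1.1, h.1.2, h.2.symm], rfl⟩

lemma gvol_union (S T : Finset V) (h : Disjoint S T) :
    gvol G (S ∪ T) = gvol G S + gvol G T := by
  unfold gvol; rw [Finset.sum_union h]

/-- cross pairs of a partition -/
def cross (t : Finset V) (P : Finpartition t) : ℕ :=
  ((t ×ˢ t).filter fun p => G.Adj p.1 p.2 ∧ ∀ u ∈ P.parts, ¬(p.1 ∈ u ∧ p.2 ∈ u)).card

/-- glue partitions of `S` and `t \ S` into a partition of `t` -/
def unionPart (S t : Finset V) (hst : S ⊆ t)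
    (P₁ : Finpartition S) (P₂ : Finpartition (t \ S)) : Finpartition t where
  parts := P₁.parts ∪ P₂.parts
  supIndep := by
    rw [Finset.supIndep_iff_pairwiseDisjoint]
    intro u hu v hv huv
    simp only [coe_union, Set.mem_union, mem_coe] at hu hv
    have hd : Disjoint S (t \ S) := Finset.disjoint_sdiff
    rcases hu with hu | hu <;> rcases hv with hv | hv
    · exact P₁.disjoint hu hv huv
    · exact hd.mono (P₁.le hu) (P₂.le hv)
    · exact (hd.mono (P₁.le hv) (P₂.le hu)).symm
    · exact P₂.disjoint hu hv huv
  sup_parts := by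
    rw [Finset.sup_union, P₁.sup_parts, P₂.sup_parts, Finset.sup_eq_union,
      Finset.union_sdiff_of_subset hst]
  bot_notMem := by
    simp only [mem_union, not_or]
    exact ⟨P₁.bot_notMem, P₂.bot_notMem⟩

lemma cross_unionPart (S t : Finset V) (hst : S ⊆ t)
    (P₁ : Finpartition S) (P₂ : Finpartition (t \ S)) :
    cross G t (unionPart S t hst P₁ P₂)
      = cross G S P₁ + cross G (t \ S) P₂ + gcut G S (t \ S) + gcut G (t \ S) S := by
  classical
  have hd : Disjoint S (t \ S) := Finset.disjoint_sdiff
  have htST : t = S ∪ (t \ S) := (Finset.union_sdiff_of_subset hst).symm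
  set pr : V × V → Prop := fun p =>
    G.Adj p.1 p.2 ∧ ∀ u ∈ P₁.parts ∪ P₂.parts, ¬(p.1 ∈ u ∧ p.2 ∈ u) with hpr
  have hcross : cross G t (unionPart S t hst P₁ P₂) = ((t ×ˢ t).filter pr).card := rfl
  have hprod : t ×ˢ t = ((S ×ˢ S ∪ S ×ˢ (t \ S)) ∪ ((t \ S) ×ˢ S ∪ (t \ S) ×ˢ (t \ S))) := by
    conv_lhs => rw [htST]
    rw [Finset.union_product, Finset.product_union, Finset.product_union]
  have hdisj : ∀ (A B C D : Finset V), Disjoint A C ∨ Disjoint B D →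
      Disjoint ((A ×ˢ B).filter pr) ((C ×ˢ D).filter pr) := by
    intro A B C D h
    rw [Finset.disjoint_left]
    rintro ⟨a, b⟩ ha hb
    simp only [mem_filter, mem_product] at ha hb
    rcases h with h | h
    · exact (Finset.disjoint_left.1 h) ha.1.1 hb.1.1
    · exact (Finset.disjoint_left.1 h) ha.1.2 hb.1.2
  have hd1 : Disjoint ((S ×ˢ S).filter pr) ((S ×ˢ (t \ S)).filter pr) :=
    hdisj _ _ _ _ (Or.inr hd)
  have hd2 : Disjoint (((t \ S) ×ˢ S).filter pr) (((t \ S) ×ˢ (t \ S)).filter pr) :=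
    hdisj _ _ _ _ (Or.inr hd)
  have hd3 : Disjoint (((S ×ˢ S).filter pr) ∪ ((S ×ˢ (t \ S)).filter pr))
      ((((t \ S) ×ˢ S).filter pr) ∪ (((t \ S) ×ˢ (t \ S)).filter pr)) := by
    rw [Finset.disjoint_left]
    rintro ⟨a, b⟩ ha hb
    simp only [mem_union, mem_filter, mem_product] at ha hb
    have ha1 : a ∈ S := by rcases ha with h | h <;> exact h.1.1
    have hb1 : a ∈ t \ S := by rcases hb with h | h <;> exact h.1.1
    exact (Finset.disjoint_left.1 hd) ha1 hb1
  have hSS : ((S ×ˢ S).filter pr).card = cross G S P₁ := by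
    unfold cross
    congr 1
    apply filter_congr
    rintro ⟨a, b⟩ hab
    simp only [mem_product] at hab
    simp only [hpr, mem_union, and_congr_right_iff]
    intro _
    constructor
    · intro h u hu
      exact h u (Or.inl hu)
    · rintro h u (hu | hu)
      · exact h u hu
      · rintro ⟨h1, _⟩
        exact (Finset.disjoint_left.1 hd) hab.1 (P₂.le hu h1)
  have hTT : (((t \ S) ×ˢ (t \ S)).filter pr).card = cross G (t \ S) P₂ := by
    unfold cross
    congr 1
    apply filter_congr
    rintro ⟨a, b⟩ hab
    simp only [mem_product] at hab
    simp only [hpr, mem_union, and_congr_right_iff]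
    intro _
    constructor
    · intro h u hu
      exact h u (Or.inr hu)
    · rintro h u (hu | hu)
      · rintro ⟨h1, _⟩
        exact (Finset.disjoint_left.1 hd) (P₁.le hu h1) hab.1
      · exact h u hu
  have hST : ((S ×ˢ (t \ S)).filter pr).card = gcut G S (t \ S) := by
    unfold gcut
    congr 1
    apply filter_congr
    rintro ⟨a, b⟩ hab
    simp only [mem_product] at hab
    simp only [hpr, mem_union]
    constructor
    · exact fun h => h.1
    · intro h
      refine ⟨h, ?_⟩
      rintro u (hu | hu) ⟨h1, h2⟩
      · exact (Finset.disjoint_left.1 hd) (P₁.le hu h2) hab.2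
      · exact (Finset.disjoint_left.1 hd) hab.1 (P₂.le hu h1)
  have hTS : (((t \ S) ×ˢ S).filter pr).card = gcut G (t \ S) S := by
    unfold gcut
    congr 1
    apply filter_congr
    rintro ⟨a, b⟩ hab
    simp only [mem_product] at hab
    simp only [hpr, mem_union]
    constructor
    · exact fun h => h.1
    · intro h
      refine ⟨h, ?_⟩
      rintro u (hu | hu) ⟨h1, h2⟩
      · exact (Finset.disjoint_left.1 hd) (P₁.le hu h1) hab.1
      · exact (Finset.disjoint_left.1 hd) hab.2 (P₂.le hu h2)
  rw [hcross, hprod, filter_union, filter_union, filter_union,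
    card_union_of_disjoint hd3, card_union_of_disjoint hd1, card_union_of_disjoint hd2,
    hSS, hTT, hST, hTS]
  omega

lemma logb_nat_nonneg (n : ℕ) : 0 ≤ Real.logb 2 (n : ℝ) := by
  rcases Nat.eq_zero_or_pos n with h | h
  · simp [h]
  · exact Real.logb_nonneg one_lt_two (by exact_mod_cast h)

/-- Main induction -/
lemma main_lemma (φ : ℝ) (hφ0 : 0 < φ) (t : Finset V) :
    ∃ P : Finpartition t,
      (∀ u ∈ P.parts, ∀ S ⊆ u,
        φ * min (gvol G S : ℝ) (gvol G (u \ S) : ℝ) ≤ (gcut G S (u \ S) : ℝ)) ∧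
      ((cross G t P : ℝ) ≤ 2 * φ * gvol G t * Real.logb 2 (gvol G t)) := by
  induction t using Finset.strongInductionOn with
  | _ t IH =>
  by_cases h : ∀ S ⊆ t, φ * min (gvol G S : ℝ) (gvol G (t \ S) : ℝ) ≤ (gcut G S (t \ S) : ℝ)
  · rcases eq_or_ne t ∅ with rfl | hne
    · refine ⟨(Finpartition.empty (Finset V)).copy bot_eq_empty, ?_, ?_⟩
      · intro u hu
        simp [Finpartition.empty, Finpartition.copy] at hu
      · have hz : cross G (∅ : Finset V) ((Finpartition.empty (Finset V)).copy bot_eq_empty) = 0 := by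
          unfold cross; simp
        rw [hz]
        push_cast
        exact mul_nonneg (by positivity) (logb_nat_nonneg _)
    · refine ⟨Finpartition.indiscrete hne, ?_, ?_⟩
      · intro u hu
        simp only [Finpartition.indiscrete, mem_singleton] at hu
        subst hu
        exact h
      · have hz : cross G t (Finpartition.indiscrete hne) = 0 := by
          unfold cross
          rw [Finset.card_eq_zero, Finset.filter_eq_empty_iff]
          rintro ⟨a, b⟩ hab
          simp only [mem_product] at hab
          rintro ⟨_, h2⟩
          exact h2 t (by simp [Finpartition.indiscrete]) ⟨hab.1, hab.2⟩
        rw [hz]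
        push_cast
        exact mul_nonneg (by positivity) (logb_nat_nonneg _)
  · push_neg at h
    obtain ⟨S₀, hS₀t, hS₀⟩ := h
    have key : ∃ S ⊆ t, (gvol G S : ℝ) ≤ (gvol G (t \ S) : ℝ) ∧
        (gcut G S (t \ S) : ℝ) < φ * gvol G S := by
      rcases le_total (gvol G S₀ : ℝ) (gvol G (t \ S₀) : ℝ) with hle | hle
      · exact ⟨S₀, hS₀t, hle, by rwa [min_eq_left hle] at hS₀⟩
      · refine ⟨t \ S₀, Finset.sdiff_subset, ?_, ?_⟩
        · rw [Finset.sdiff_sdiff_eq_self hS₀t]; exact hle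
        · rw [Finset.sdiff_sdiff_eq_self hS₀t, gcut_comm]
          rwa [min_eq_right hle] at hS₀
    obtain ⟨S, hSt, hvle, hcut⟩ := key
    have hd : Disjoint S (t \ S) := Finset.disjoint_sdiff
    have hv1 : 1 ≤ gvol G S := by
      by_contra hc
      push_neg at hc
      have h0 : gvol G S = 0 := Nat.lt_one_iff.mp hc
      rw [h0] at hcut
      push_cast at hcut
      nlinarith [Nat.cast_nonneg (α := ℝ) (gcut G S (t \ S))]
    have hv1' : (1 : ℝ) ≤ (gvol G S : ℝ) := by exact_mod_cast hv1
    have hv2 : 1 ≤ gvol G (t \ S) := by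
      have : (1 : ℝ) ≤ (gvol G (t \ S) : ℝ) := le_trans hv1' hvle
      exact_mod_cast this
    have hv2' : (1 : ℝ) ≤ (gvol G (t \ S) : ℝ) := by exact_mod_cast hv2
    have hSne : S.Nonempty := by
      rcases S.eq_empty_or_nonempty with rfl | hs
      · simp [gvol] at hv1
      · exact hs
    have hTne : (t \ S).Nonempty := by
      rcases (t \ S).eq_empty_or_nonempty with hTe | hs
      · rw [hTe] at hv2; simp [gvol] at hv2
      · exact hs
    have hSsub : S ⊂ t := by
      refine (Finset.ssubset_iff_of_subset hSt).2 ?_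
      obtain ⟨x, hx⟩ := hTne
      exact ⟨x, (Finset.mem_sdiff.1 hx).1, (Finset.mem_sdiff.1 hx).2⟩
    have hTsub : t \ S ⊂ t := by
      refine (Finset.ssubset_iff_of_subset Finset.sdiff_subset).2 ?_
      obtain ⟨x, hx⟩ := hSne
      exact ⟨x, hSt hx, by simp [hx]⟩
    obtain ⟨P₁, hP₁good, hP₁cross⟩ := IH S hSsub
    obtain ⟨P₂, hP₂good, hP₂cross⟩ := IH (t \ S) hTsub
    refine ⟨unionPart S t hSt P₁ P₂, ?_, ?_⟩
    · intro u hu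
      have hu' : u ∈ P₁.parts ∪ P₂.parts := hu
      rcases mem_union.1 hu' with hu'' | hu''
      · exact hP₁good u hu''
      · exact hP₂good u hu''
    · rw [cross_unionPart]
      have hvol : gvol G t = gvol G S + gvol G (t \ S) := by
        conv_lhs => rw [← Finset.union_sdiff_of_subset hSt]
        exact gvol_union G S (t \ S) hd
      set v₁ : ℝ := (gvol G S : ℝ) with hv₁
      set v₂ : ℝ := (gvol G (t \ S) : ℝ) with hv₂
      have hvolR : (gvol G t : ℝ) = v₁ + v₂ := by rw [hvol]; push_cast; ring
      have hL1 : Real.logb 2 v₁ + 1 ≤ Real.logb 2 (v₁ + v₂) := by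
        have h2v : Real.logb 2 (2 * v₁) = 1 + Real.logb 2 v₁ := by
          rw [Real.logb_mul (by norm_num) (by intro hc; rw [hc] at hv1'; norm_num at hv1'), Real.logb_self_eq_one one_lt_two]
        have hmono : Real.logb 2 (2 * v₁) ≤ Real.logb 2 (v₁ + v₂) :=
          Real.logb_le_logb_of_le one_lt_two (by linarith) (by linarith)
        linarith
      have hL2 : Real.logb 2 v₂ ≤ Real.logb 2 (v₁ + v₂) :=
        Real.logb_le_logb_of_le one_lt_two (by linarith) (by linarith)
      have hccomm : ((gcut G (t \ S) S : ℕ) : ℝ) = ((gcut G S (t \ S) : ℕ) : ℝ) := by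
        exact_mod_cast congrArg (Nat.cast : ℕ → ℝ) (gcut_comm G (t \ S) S)
      have hc1 : (cross G S P₁ : ℝ) ≤ 2 * φ * v₁ * Real.logb 2 v₁ := hP₁cross
      have hc2 : (cross G (t \ S) P₂ : ℝ) ≤ 2 * φ * v₂ * Real.logb 2 v₂ := hP₂cross
      have hv1nn : (0:ℝ) ≤ v₁ := by linarith
      have hv2nn : (0:ℝ) ≤ v₂ := by linarith
      have k1 : 2 * φ * v₁ * (Real.logb 2 v₁ + 1) ≤ 2 * φ * v₁ * Real.logb 2 (v₁ + v₂) :=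
        mul_le_mul_of_nonneg_left hL1
          (mul_nonneg (mul_nonneg (by norm_num) hφ0.le) hv1nn)
      have k2 : 2 * φ * v₂ * Real.logb 2 v₂ ≤ 2 * φ * v₂ * Real.logb 2 (v₁ + v₂) :=
        mul_le_mul_of_nonneg_left hL2
          (mul_nonneg (mul_nonneg (by norm_num) hφ0.le) hv2nn)
      rw [hvolR]
      push_cast
      rw [hccomm]
      linarith [hc1, hc2, k1, k2, hcut]

end Aux

/-- For every finite simple graph `G = (V, E)` with `m := |E| ≥ 1` edges and
every `φ ∈ (0,1)`, there exists a partition `V = V₁ ∪ ⋯ ∪ V_x` such that: (1) for every part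
`Vᵢ` and every `S ⊆ Vᵢ`, `|E(S, Vᵢ ∖ S)| ≥ φ·min(Vol S, Vol(Vᵢ ∖ S))` (volumes w.r.t. degrees
in `G`); and (2) the number of edges of `G` whose endpoints lie in different parts (here
counted as ordered adjacent pairs, divided by `2`) is at most `2φ·m·log₂(2m)`. -/
theorem expander_decomposition_exists
    {V : Type*} [Fintype V] [DecidableEq V] (G : SimpleGraph V) [DecidableRel G.Adj]
    (m : ℕ) (hm : m = G.edgeFinset.card) (hm1 : 1 ≤ m)
    (φ : ℝ) (hφ0 : 0 < φ) (hφ1 : φ < 1) :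
    ∃ P : Finpartition (Finset.univ : Finset V),
      (∀ t ∈ P.parts, ∀ S ⊆ t,
        φ * min (gvol G S : ℝ) (gvol G (t \ S) : ℝ) ≤ (gcut G S (t \ S) : ℝ)) ∧
      (((Finset.univ.filter fun p : V × V =>
          G.Adj p.1 p.2 ∧ ∀ t ∈ P.parts, ¬(p.1 ∈ t ∧ p.2 ∈ t)).card : ℝ) / 2
        ≤ 2 * φ * m * Real.logb 2 (2 * m)) := by
  
  obtain ⟨P, h1, h2⟩ := main_lemma G φ hφ0 (Finset.univ : Finset V)
  refine ⟨P, h1, ?_⟩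
  have hvol : gvol G (Finset.univ : Finset V) = 2 * m := by
    unfold gvol
    rw [hm]
    exact G.sum_degrees_eq_twice_card_edges
  have hcross : (Finset.univ.filter fun p : V × V =>
      G.Adj p.1 p.2 ∧ ∀ t ∈ P.parts, ¬(p.1 ∈ t ∧ p.2 ∈ t)).card = cross G Finset.univ P := by
    unfold cross
    rw [Finset.univ_product_univ]
  rw [hcross]
  rw [hvol] at h2
  push_cast at h2 ⊢
  linarith
end

section
/- Let G be a finite simple graph with vertex set V, let a ≥ 1 be an integer and V_D' ⊆ V. Let W_0 := {u ∈ V : dist_G(u, V_D') ≤ a}, let S be the vertex set of a connected component of G[W_0], let s, t ∈ S, and let k be a positive integer with dist_{G[S]}(s,t) ≥ (4a+1)·k. Then there exist k+1 vertices v_0, …, v_k ∈ V_D' ∩ S such that dist_{G[S]}(s, v_i) ≤ (4a+1)·k + a for every 0 ≤ i ≤ k, and dist_G(v_i, v_j) > 2a for all 0 ≤ i < j ≤ k. -/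
open Finset

/-- The subgraph of `G` induced by the vertex set `S`, viewed as a graph on all of `V`
(vertices outside `S` are isolated). Distances between vertices of `S` in this graph agree
with distances in the induced subgraph `G[S]`. -/
def SimpleGraph.restrictS {V : Type*} (G : SimpleGraph V) (S : Set V) : SimpleGraph V where
  Adj u v := u ∈ S ∧ v ∈ S ∧ G.Adj u v
  symm := ⟨fun u v ⟨hu, hv, h⟩ => ⟨hv, hu, h.symm⟩⟩
  loopless := ⟨fun u ⟨_, _, h⟩ => G.ne_of_adj h rfl⟩

lemma restrict_support_mem {V : Type*} (G : SimpleGraph V) (S : Set V) :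
    ∀ {u v : V} (p : (G.restrictS S).Walk u v), u ∈ S → ∀ x ∈ p.support, x ∈ S := by
  intro u v p
  induction p with
  | nil => intro hu x hx; simp at hx; subst hx; exact hu
  | cons h q ih =>
    intro hu x hx
    rw [SimpleGraph.Walk.support_cons] at hx
    rcases List.mem_cons.mp hx with h1 | h2
    · subst h1; exact hu
    · exact ih h.2.1 x h2

lemma transfer_walk {V : Type*} (G : SimpleGraph V) (W Sx : Set V) (s : V)
    (hS : Sx = {v | v ∈ W ∧ (G.restrictS W).Reachable s v}) :
    ∀ {u v : V} (p : G.Walk u v), u ∈ Sx → (∀ x ∈ p.support, x ∈ W) →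
      v ∈ Sx ∧ (G.restrictS Sx).edist u v ≤ (p.length : ℕ∞) := by
  intro u v p
  induction p with
  | nil =>
    intro hu _
    refine ⟨hu, ?_⟩
    simp [SimpleGraph.edist_self]
  | @cons u b v h q ih =>
    intro hu hsup
    have hbW : b ∈ W := hsup b (by simp)
    have huW : u ∈ W ∧ (G.restrictS W).Reachable s u := by rwa [hS] at hu
    have adjW : (G.restrictS W).Adj u b := ⟨huW.1, hbW, h⟩
    have hbS : b ∈ Sx := by
      rw [hS]; exact ⟨hbW, huW.2.trans adjW.reachable⟩
    obtain ⟨hvS, hle⟩ := ih hbS (fun x hx => hsup x (by simp [hx]))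
    refine ⟨hvS, ?_⟩
    have adjS : (G.restrictS Sx).Adj u b := ⟨hu, hbS, h⟩
    calc (G.restrictS Sx).edist u v ≤ (G.restrictS Sx).edist u b + (G.restrictS Sx).edist b v :=
          SimpleGraph.edist_triangle
      _ ≤ 1 + (q.length : ℕ∞) := by
          gcongr
          · simpa using SimpleGraph.edist_le adjS.toWalk
      _ = ((q.length + 1 : ℕ) : ℕ∞) := by push_cast; ring
      _ = _ := by rw [SimpleGraph.Walk.length_cons]

lemma edist_getVert_left {V : Type*} (G : SimpleGraph V) :
    ∀ {u v : V} (p : G.Walk u v) (i : ℕ), G.edist u (p.getVert i) ≤ (i : ℕ∞) := by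
  intro u v p
  induction p with
  | nil =>
    intro i
    rw [SimpleGraph.Walk.getVert_of_length_le _ (by simp)]
    simp [SimpleGraph.edist_self]
  | @cons u b v h q ih =>
    intro i
    cases i with
    | zero => simp [SimpleGraph.Walk.getVert_zero, SimpleGraph.edist_self]
    | succ n =>
      rw [SimpleGraph.Walk.getVert_cons_succ]
      calc G.edist u (q.getVert n) ≤ G.edist u b + G.edist b (q.getVert n) :=
            SimpleGraph.edist_triangle
        _ ≤ 1 + (n : ℕ∞) := by
            gcongr
            · simpa using SimpleGraph.edist_le h.toWalk
            · exact ih n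
        _ = ((n + 1 : ℕ) : ℕ∞) := by push_cast; ring

lemma edist_getVert_right {V : Type*} (G : SimpleGraph V) :
    ∀ {u v : V} (p : G.Walk u v) (i : ℕ), G.edist (p.getVert i) v ≤ ((p.length - i : ℕ) : ℕ∞) := by
  intro u v p
  induction p with
  | nil =>
    intro i
    rw [SimpleGraph.Walk.getVert_of_length_le _ (by simp)]
    simp [SimpleGraph.edist_self]
  | @cons u b v h q ih =>
    intro i
    cases i with
    | zero =>
      rw [SimpleGraph.Walk.getVert_zero]
      calc G.edist u v ≤ ((q.cons h).length : ℕ∞) := SimpleGraph.edist_le _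
        _ = (((q.cons h).length - 0 : ℕ) : ℕ∞) := by simp
    | succ n =>
      rw [SimpleGraph.Walk.getVert_cons_succ]
      have heq : (q.cons h).length - (n + 1) = q.length - n := by
        rw [SimpleGraph.Walk.length_cons]; omega
      rw [heq]
      exact ih n

/-- Lemma B.5. Let `a ≥ 1`, `V_D' ⊆ V`, and
`W₀ := {u : dist_G(u, V_D') ≤ a}`. Let `S` be the vertex set of a connected component of
`G[W₀]`, let `s, t ∈ S`, and let `k ≥ 1` with `dist_{G[S]}(s,t) ≥ (4a+1)·k`. Then there exist
`k+1` vertices `v₀, …, v_k ∈ V_D' ∩ S` with `dist_{G[S]}(s, vᵢ) ≤ (4a+1)·k + a` for all `i`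
and `dist_G(vᵢ, vⱼ) > 2a` for all `i ≠ j`. -/
theorem separated_centers_along_shortest_path
    {V : Type*} [Fintype V] (G : SimpleGraph V)
    (a : ℕ) (ha : 1 ≤ a) (VD : Set V)
    (W₀ : Set V) (hW₀ : W₀ = {u | ∃ w ∈ VD, G.edist u w ≤ (a : ℕ∞)})
    (s t : V) (hs : s ∈ W₀)
    (S : Set V) (hS : S = {v | v ∈ W₀ ∧ (G.restrictS W₀).Reachable s v})
    (ht : t ∈ S)
    (k : ℕ) (hk : 1 ≤ k)
    (hdist : (((4 * a + 1) * k : ℕ) : ℕ∞) ≤ (G.restrictS S).edist s t) :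
    ∃ v : Fin (k + 1) → V,
      (∀ i, v i ∈ VD ∩ S) ∧
      (∀ i, (G.restrictS S).edist s (v i) ≤ (((4 * a + 1) * k + a : ℕ) : ℕ∞)) ∧
      (∀ i j, i ≠ j → ((2 * a : ℕ) : ℕ∞) < G.edist (v i) (v j)) := by
  classical
  have hSW : ∀ x ∈ S, x ∈ W₀ := by
    intro x hx; rw [hS] at hx; exact hx.1
  have hsS : s ∈ S := by rw [hS]; exact ⟨hs, SimpleGraph.Reachable.refl s⟩
  have le0 : G.restrictS W₀ ≤ G := fun u v h => h.2.2
  have htS := ht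
  rw [hS] at htS
  obtain ⟨p0⟩ := htS.2
  have hsup0S : ∀ x ∈ p0.support, x ∈ W₀ := restrict_support_mem G W₀ p0 hs
  have hsup0 : ∀ x ∈ (p0.mapLe le0).support, x ∈ W₀ := by
    intro x hx
    apply hsup0S
    simpa [SimpleGraph.Walk.support_map] using hx
  obtain ⟨-, hedst⟩ := transfer_walk G W₀ S s hS (p0.mapLe le0) hsS hsup0
  have hnetop : (G.restrictS S).edist s t ≠ ⊤ :=
    ne_top_of_le_ne_top (ENat.coe_ne_top _) hedst
  obtain ⟨p, hp⟩ := SimpleGraph.exists_walk_of_edist_ne_top hnetop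
  have hL : (4 * a + 1) * k ≤ p.length := by
    have h2 := hdist
    rw [← hp] at h2
    exact_mod_cast h2
  have hsupp : ∀ x ∈ p.support, x ∈ S := restrict_support_mem G S p hsS
  have key : ∀ i : Fin (k + 1), ∃ w, w ∈ VD ∧ w ∈ S ∧
      (G.restrictS S).edist (p.getVert ((4 * a + 1) * i)) w ≤ (a : ℕ∞) := by
    intro i
    have hik : (i : ℕ) ≤ k := by omega
    have hci : (4 * a + 1) * (i : ℕ) ≤ p.length :=
      le_trans (Nat.mul_le_mul_left _ hik) hL
    have hgS : p.getVert ((4 * a + 1) * i) ∈ S :=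
      hsupp _ (SimpleGraph.Walk.mem_support_iff_exists_getVert.mpr ⟨_, rfl, hci⟩)
    have hgW : p.getVert ((4 * a + 1) * i) ∈ W₀ := hSW _ hgS
    rw [hW₀] at hgW
    obtain ⟨w, hwVD, hwe⟩ := hgW
    obtain ⟨r, hr⟩ := SimpleGraph.exists_walk_of_edist_ne_top
      (ne_top_of_le_ne_top (ENat.coe_ne_top a) hwe)
    have hrlen : r.length ≤ a := by
      rw [← hr] at hwe; exact_mod_cast hwe
    have hsupr : ∀ x ∈ r.support, x ∈ W₀ := by
      intro x hx
      rw [hW₀]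
      refine ⟨w, hwVD, ?_⟩
      calc G.edist x w ≤ ((r.dropUntil x hx).length : ℕ∞) := SimpleGraph.edist_le _
        _ ≤ (a : ℕ∞) := by
            exact_mod_cast le_trans (SimpleGraph.Walk.length_dropUntil_le r hx) hrlen
    obtain ⟨hwS, hle⟩ := transfer_walk G W₀ S s hS r hgS hsupr
    exact ⟨w, hwVD, hwS, hle.trans (by exact_mod_cast hrlen)⟩
  choose v hv1 hv2 hv3 using key
  have main : ∀ i j : Fin (k + 1), (i : ℕ) < (j : ℕ) →
      ((2 * a : ℕ) : ℕ∞) < G.edist (v i) (v j) := by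
    intro i j hij
    by_contra hcon
    push_neg at hcon
    obtain ⟨r, hr⟩ := SimpleGraph.exists_walk_of_edist_ne_top
      (ne_top_of_le_ne_top (ENat.coe_ne_top (2 * a)) hcon)
    have hrlen : r.length ≤ 2 * a := by
      rw [← hr] at hcon; exact_mod_cast hcon
    have hsupr : ∀ x ∈ r.support, x ∈ W₀ := by
      intro x hx
      have hsplit : (r.takeUntil x hx).length + (r.dropUntil x hx).length = r.length := by
        have h5 := congrArg SimpleGraph.Walk.length (r.take_spec hx)
        rwa [SimpleGraph.Walk.length_append] at h5
      rw [hW₀]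
      by_cases hc : (r.takeUntil x hx).length ≤ a
      · refine ⟨v i, hv1 i, ?_⟩
        calc G.edist x (v i) ≤ ((r.takeUntil x hx).reverse.length : ℕ∞) :=
              SimpleGraph.edist_le _
          _ ≤ (a : ℕ∞) := by
              rw [SimpleGraph.Walk.length_reverse]; exact_mod_cast hc
      · refine ⟨v j, hv1 j, ?_⟩
        calc G.edist x (v j) ≤ ((r.dropUntil x hx).length : ℕ∞) := SimpleGraph.edist_le _
          _ ≤ (a : ℕ∞) := by
              exact_mod_cast (by omega : (r.dropUntil x hx).length ≤ a)
    obtain ⟨-, hHvv⟩ := transfer_walk G W₀ S s hS r (hv2 i) hsupr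
    have hHvv2 : (G.restrictS S).edist (v i) (v j) ≤ ((2 * a : ℕ) : ℕ∞) :=
      hHvv.trans (by exact_mod_cast hrlen)
    have h4 : (G.restrictS S).edist (p.getVert ((4 * a + 1) * i))
        (p.getVert ((4 * a + 1) * j)) ≤ ((4 * a : ℕ) : ℕ∞) := by
      calc (G.restrictS S).edist (p.getVert ((4 * a + 1) * i)) (p.getVert ((4 * a + 1) * j))
          ≤ (G.restrictS S).edist (p.getVert ((4 * a + 1) * i)) (v i) +
            (G.restrictS S).edist (v i) (p.getVert ((4 * a + 1) * j)) :=
            SimpleGraph.edist_triangle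
        _ ≤ (G.restrictS S).edist (p.getVert ((4 * a + 1) * i)) (v i) +
            ((G.restrictS S).edist (v i) (v j) +
             (G.restrictS S).edist (v j) (p.getVert ((4 * a + 1) * j))) := by
            gcongr
            exact SimpleGraph.edist_triangle
        _ ≤ (a : ℕ∞) + (((2 * a : ℕ) : ℕ∞) + (a : ℕ∞)) :=
            add_le_add (hv3 i) (add_le_add hHvv2
              (by rw [SimpleGraph.edist_comm]; exact hv3 j))
        _ = ((4 * a : ℕ) : ℕ∞) := by push_cast; ring
    set x : ℕ := ((G.restrictS S).edist (p.getVert ((4 * a + 1) * i))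
      (p.getVert ((4 * a + 1) * j))).toNat with hxdef
    have hx : (x : ℕ∞) = (G.restrictS S).edist (p.getVert ((4 * a + 1) * i))
        (p.getVert ((4 * a + 1) * j)) :=
      ENat.coe_toNat (ne_top_of_le_ne_top (ENat.coe_ne_top (4 * a)) h4)
    have hxle : x ≤ 4 * a := by rw [← hx] at h4; exact_mod_cast h4
    have htri : ((p.length : ℕ) : ℕ∞) ≤ (((4 * a + 1) * i : ℕ) : ℕ∞) + (x : ℕ∞) +
        (((p.length - (4 * a + 1) * j : ℕ)) : ℕ∞) := by
      rw [hp]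
      calc (G.restrictS S).edist s t
          ≤ (G.restrictS S).edist s (p.getVert ((4 * a + 1) * i)) +
            (G.restrictS S).edist (p.getVert ((4 * a + 1) * i)) t :=
            SimpleGraph.edist_triangle
        _ ≤ (G.restrictS S).edist s (p.getVert ((4 * a + 1) * i)) +
            ((G.restrictS S).edist (p.getVert ((4 * a + 1) * i)) (p.getVert ((4 * a + 1) * j)) +
             (G.restrictS S).edist (p.getVert ((4 * a + 1) * j)) t) := by
            gcongr
            exact SimpleGraph.edist_triangle
        _ ≤ (((4 * a + 1) * i : ℕ) : ℕ∞) + ((x : ℕ∞) +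
            (((p.length - (4 * a + 1) * j : ℕ)) : ℕ∞)) := by
            refine add_le_add (edist_getVert_left _ p _)
              (add_le_add ?_ (edist_getVert_right _ p _))
            rw [hx]
        _ = _ := by rw [add_assoc]
    have hxnat : p.length ≤ (4 * a + 1) * i + x + (p.length - (4 * a + 1) * j) := by
      exact_mod_cast htri
    have hcij : (4 * a + 1) * (i : ℕ) + (4 * a + 1) ≤ (4 * a + 1) * (j : ℕ) := by
      have h6 : (4 * a + 1) * ((i : ℕ) + 1) ≤ (4 * a + 1) * (j : ℕ) :=
        Nat.mul_le_mul_left _ (by omega)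
      rwa [Nat.mul_add, Nat.mul_one] at h6
    have hcj : (4 * a + 1) * (j : ℕ) ≤ p.length :=
      le_trans (Nat.mul_le_mul_left _ (by omega)) hL
    omega
  refine ⟨v, fun i => ⟨hv1 i, hv2 i⟩, ?_, ?_⟩
  · intro i
    have hik : (i : ℕ) ≤ k := by omega
    calc (G.restrictS S).edist s (v i)
        ≤ (G.restrictS S).edist s (p.getVert ((4 * a + 1) * i)) +
          (G.restrictS S).edist (p.getVert ((4 * a + 1) * i)) (v i) :=
          SimpleGraph.edist_triangle
      _ ≤ (((4 * a + 1) * i : ℕ) : ℕ∞) + (a : ℕ∞) :=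
          add_le_add (edist_getVert_left _ p _) (hv3 i)
      _ ≤ (((4 * a + 1) * k + a : ℕ) : ℕ∞) := by
          exact_mod_cast Nat.add_le_add_right (Nat.mul_le_mul_left _ hik) a
  · intro i j hne
    rcases lt_trichotomy (i : ℕ) (j : ℕ) with h | h | h
    · exact main i j h
    · exact absurd (Fin.ext h) hne
    · rw [SimpleGraph.edist_comm]; exact main j i h
end

section
/- Let G be a finite simple graph with vertex set V in which every vertex has degree at least 1, let m := |E| ≥ 2, and let M be the lazy random walk matrix of G. Let φ ∈ (0,1], let ℓ := ⌈log₂ m⌉, let t₀ be a positive integer, and for each integer b ∈ [1, ℓ] set ε_b := φ / (56·ln(m·e⁴)·t₀·2^b). For a vertex u define Z_{u,b} := {v ∈ V : ρ_t^v(u) ≥ 2ε_b for some integer t ∈ [0, t₀]}, and for an edge e = {u₁, u₂} define Z_{e,b} := Z_{u₁,b} ∪ Z_{u₂,b}. Sample a vertex v ∈ V with probability deg(v)/Vol(V) and, independently, an integer b ∈ [1, ℓ] with probability Pr[b = i] = 2^{−i}/(1 − 2^{−ℓ}). Then for every edge e of G, Pr[v ∈ Z_{e,b}] ≤ 112·ℓ·(t₀+1)·t₀·ln(m·e⁴)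 / (φ·Vol(V)). -/
open Finset Matrix

/-- probability computation in Lemma 4.4, analysis of RandomNibble.
Let `G` be a finite simple graph with minimum degree at least `1`, `m := |E| ≥ 2`, `M` the
lazy random walk matrix, `φ ∈ (0,1]`, `ℓ := ⌈log₂ m⌉`, `t₀ ≥ 1`, and for `b ∈ [1, ℓ]` set
`ε_b := φ / (56·ln(m·e⁴)·t₀·2^b)`. For a vertex `u`, `Z_{u,b}` is the set of `v` with
`ρ_t^v(u) = (M^t) u v / deg u ≥ 2ε_b` for some integer `t ∈ [0, t₀]`, and for an edge
`e = {u₁, u₂}`, `Z_{e,b} := Z_{u₁,b} ∪ Z_{u₂,b}`. Sampling `v` with probability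
`deg v / Vol V` and, independently, `b ∈ [1, ℓ]` with `Pr[b = i] = 2^{−i}/(1 − 2^{−ℓ})`,
we have `Pr[v ∈ Z_{e,b}] ≤ 112·ℓ·(t₀+1)·t₀·ln(m·e⁴) / (φ·Vol V)`. -/
theorem random_nibble_edge_participation_probability
    {V : Type*} [Fintype V] [DecidableEq V] [Nonempty V]
    (G : SimpleGraph V) [DecidableRel G.Adj]
    (hdeg : ∀ v, 1 ≤ G.degree v)
    (m : ℕ) (hm : m = G.edgeFinset.card) (hm2 : 2 ≤ m)
    (M : Matrix V V ℝ)
    (hM : M = (1 / 2 : ℝ) •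
      (G.adjMatrix ℝ * Matrix.diagonal (fun v => ((G.degree v : ℝ))⁻¹) + 1))
    (φ : ℝ) (hφ0 : 0 < φ) (hφ1 : φ ≤ 1)
    (ℓ : ℕ) (hℓ : ℓ = Nat.clog 2 m)
    (t₀ : ℕ) (ht₀ : 1 ≤ t₀)
    (ε : ℕ → ℝ)
    (hε : ∀ b, ε b = φ / (56 * Real.log (m * Real.exp 4) * t₀ * 2 ^ b))
    (Z : V → ℕ → Finset V)
    (hZ : ∀ u b v, v ∈ Z u b ↔ ∃ t ≤ t₀, 2 * ε b ≤ (M ^ t) u v / (G.degree u : ℝ))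
    (u₁ u₂ : V) (he : G.Adj u₁ u₂) :
    ∑ i ∈ Finset.Icc 1 ℓ,
        (((2 : ℝ) ^ i)⁻¹ / (1 - ((2 : ℝ) ^ ℓ)⁻¹)) *
          ((∑ v ∈ Z u₁ i ∪ Z u₂ i, (G.degree v : ℝ)) / ∑ v, (G.degree v : ℝ))
      ≤ 112 * ℓ * ((t₀ : ℝ) + 1) * t₀ * Real.log (m * Real.exp 4) /
          (φ * ∑ v, (G.degree v : ℝ)) := by
  set L := Real.log (m * Real.exp 4) with hLdef
  set Vol := ∑ v, (G.degree v : ℝ) with hVoldef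
  have hdpos : ∀ v, (0:ℝ) < G.degree v := fun v => by exact_mod_cast hdeg v
  have hVol : 0 < Vol :=
    Finset.sum_pos (fun v _ => hdpos v) univ_nonempty
  -- L > 0
  have hLpos : 0 < L := by
    rw [hLdef, Real.log_mul (by positivity) (by positivity), Real.log_exp]
    have : (0:ℝ) ≤ Real.log m := Real.log_nonneg (by exact_mod_cast Nat.one_le_of_lt hm2)
    linarith
  have ht₀pos : (0:ℝ) < t₀ := by exact_mod_cast ht₀
  have hεpos : ∀ b : ℕ, 0 < ε b := fun b => by
    rw [hε]; positivity
  -- ℓ ≥ 1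
  have hℓ1 : 1 ≤ ℓ := by
    rw [hℓ]; exact Nat.clog_pos one_lt_two hm2
  -- entries of M^t are nonnegative
  have hMnn : ∀ u v, 0 ≤ M u v := by
    intro u v
    rw [hM]
    simp only [Matrix.smul_apply, Matrix.add_apply, Matrix.mul_diagonal,
      Matrix.one_apply, smul_eq_mul]
    have h1 : (0:ℝ) ≤ G.adjMatrix ℝ u v := by simp [SimpleGraph.adjMatrix_apply]; positivity
    have h2 : (0:ℝ) ≤ ((G.degree v : ℝ))⁻¹ := by positivity
    have h3 : (0:ℝ) ≤ (if u = v then (1:ℝ) else 0) := by positivity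
    positivity
  have hPnn : ∀ t u v, 0 ≤ (M ^ t) u v := by
    intro t
    induction t with
    | zero => intro u v; simp [Matrix.one_apply]; positivity
    | succ t ih =>
      intro u v
      rw [pow_succ, Matrix.mul_apply]
      exact Finset.sum_nonneg fun w _ => mul_nonneg (ih u w) (hMnn w v)
  -- weighted row sums
  have hrow1 : ∀ u, ∑ v, M u v * (G.degree v : ℝ) = G.degree u := by
    intro u
    have hAd : ∑ v, (G.adjMatrix ℝ) u v = G.degree u := by
      simp [SimpleGraph.adjMatrix_apply, sum_boole, SimpleGraph.degree,
        SimpleGraph.neighborFinset_eq_filter]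
    have h1 : ∀ v, M u v = (1/2) * (G.adjMatrix ℝ u v * ((G.degree v:ℝ))⁻¹
        + (if u = v then (1:ℝ) else 0)) := by
      intro v; rw [hM]; simp [Matrix.mul_diagonal, Matrix.one_apply]
    have h2 : ∀ v, M u v * (G.degree v : ℝ) =
        (1/2) * (G.adjMatrix ℝ u v + (if u = v then (1:ℝ) else 0) * G.degree v) := by
      intro v
      have hd0 : (G.degree v : ℝ) ≠ 0 := ne_of_gt (hdpos v)
      rw [h1]; field_simp
    simp only [h2]
    rw [← Finset.mul_sum, Finset.sum_add_distrib, hAd]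
    simp [ite_mul]; ring
  have hrow : ∀ t u, ∑ v, (M ^ t) u v * (G.degree v : ℝ) = G.degree u := by
    intro t
    induction t with
    | zero => intro u; simp [Matrix.one_apply, ite_mul]
    | succ t ih =>
      intro u
      have : ∀ v, ((M ^ (t+1)) u v : ℝ) = ∑ w, (M ^ t) u w * M w v := by
        intro v; rw [pow_succ, Matrix.mul_apply]
      simp only [this, Finset.sum_mul]
      rw [Finset.sum_comm]
      have : ∀ w, ∑ v, (M ^ t) u w * M w v * (G.degree v : ℝ)
          = (M ^ t) u w * (G.degree w : ℝ) := by
        intro w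
        simp only [mul_assoc, ← Finset.mul_sum, hrow1 w]
      simp only [this]
      exact ih u
  -- per-vertex volume bound
  have hZvol : ∀ u b, ∑ v ∈ Z u b, (G.degree v : ℝ) ≤ ((t₀:ℝ) + 1) / (2 * ε b) := by
    intro u b
    have key : ∀ t, ∑ v, (if 2 * ε b ≤ (M ^ t) u v / (G.degree u : ℝ)
        then (G.degree v : ℝ) else 0) ≤ 1 / (2 * ε b) := by
      intro t
      have hstep : ∀ v, (if 2 * ε b ≤ (M ^ t) u v / (G.degree u : ℝ)
          then (G.degree v : ℝ) else 0)
          ≤ (M ^ t) u v * (G.degree v : ℝ) / ((G.degree u : ℝ) * (2 * ε b)) := by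
        intro v
        split_ifs with h
        · have h' : 2 * ε b * (G.degree u : ℝ) ≤ (M ^ t) u v :=
            (le_div_iff₀ (hdpos u)).mp h
          rw [le_div_iff₀ (mul_pos (hdpos u) (mul_pos two_pos (hεpos b)))]
          calc (G.degree v : ℝ) * ((G.degree u : ℝ) * (2 * ε b))
              = (2 * ε b * (G.degree u : ℝ)) * (G.degree v : ℝ) := by ring
            _ ≤ (M ^ t) u v * (G.degree v : ℝ) :=
                mul_le_mul_of_nonneg_right h' (hdpos v).le
        · exact div_nonneg (mul_nonneg (hPnn t u v) (hdpos v).le)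
            (mul_nonneg (hdpos u).le (mul_nonneg zero_le_two (hεpos b).le))
      calc ∑ v, (if 2 * ε b ≤ (M ^ t) u v / (G.degree u : ℝ) then (G.degree v : ℝ) else 0)
          ≤ ∑ v, (M ^ t) u v * (G.degree v : ℝ) / ((G.degree u : ℝ) * (2 * ε b)) :=
            Finset.sum_le_sum fun v _ => hstep v
        _ = (∑ v, (M ^ t) u v * (G.degree v : ℝ)) / ((G.degree u : ℝ) * (2 * ε b)) := by
            rw [← Finset.sum_div]
        _ = (G.degree u : ℝ) / ((G.degree u : ℝ) * (2 * ε b)) := by rw [hrow]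
        _ = 1 / (2 * ε b) := by
            rw [div_eq_div_iff (mul_pos (hdpos u) (mul_pos two_pos (hεpos b))).ne'
              (mul_pos two_pos (hεpos b)).ne']
            ring
    calc ∑ v ∈ Z u b, (G.degree v : ℝ)
        ≤ ∑ v ∈ Z u b, ∑ t ∈ Finset.range (t₀ + 1),
            (if 2 * ε b ≤ (M ^ t) u v / (G.degree u : ℝ) then (G.degree v : ℝ) else 0) := by
          apply Finset.sum_le_sum
          intro v hv
          obtain ⟨t, ht, hcond⟩ := (hZ u b v).mp hv
          calc (G.degree v : ℝ)
              = (if 2 * ε b ≤ (M ^ t) u v / (G.degree u : ℝ)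
                  then (G.degree v : ℝ) else 0) := by rw [if_pos hcond]
            _ ≤ _ := by
                apply Finset.single_le_sum (f := fun t =>
                  (if 2 * ε b ≤ (M ^ t) u v / (G.degree u : ℝ) then (G.degree v : ℝ) else 0))
                · intro i _; split_ifs; exacts [le_of_lt (hdpos v), le_refl 0]
                · exact Finset.mem_range.mpr (Nat.lt_succ_of_le ht)
      _ = ∑ t ∈ Finset.range (t₀ + 1), ∑ v ∈ Z u b,
            (if 2 * ε b ≤ (M ^ t) u v / (G.degree u : ℝ) then (G.degree v : ℝ) else 0) :=
          Finset.sum_comm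
      _ ≤ ∑ t ∈ Finset.range (t₀ + 1), ∑ v,
            (if 2 * ε b ≤ (M ^ t) u v / (G.degree u : ℝ) then (G.degree v : ℝ) else 0) := by
          apply Finset.sum_le_sum
          intro t _
          apply Finset.sum_le_sum_of_subset_of_nonneg (Finset.subset_univ _)
          intro v _ _; split_ifs; exacts [le_of_lt (hdpos v), le_refl 0]
      _ ≤ ∑ t ∈ Finset.range (t₀ + 1), 1 / (2 * ε b) :=
          Finset.sum_le_sum fun t _ => key t
      _ = ((t₀:ℝ) + 1) / (2 * ε b) := by
          rw [Finset.sum_const, Finset.card_range]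
          push_cast; ring
  -- union bound
  have hUvol : ∀ b, ∑ v ∈ Z u₁ b ∪ Z u₂ b, (G.degree v : ℝ) ≤ ((t₀:ℝ) + 1) / ε b := by
    intro b
    have h1 : ∑ v ∈ Z u₁ b ∪ Z u₂ b, (G.degree v : ℝ)
        ≤ ∑ v ∈ Z u₁ b, (G.degree v : ℝ) + ∑ v ∈ Z u₂ b, (G.degree v : ℝ) := by
      have := Finset.sum_union_inter (s₁ := Z u₁ b) (s₂ := Z u₂ b)
        (f := fun v => (G.degree v : ℝ))
      have hnn : 0 ≤ ∑ v ∈ Z u₁ b ∩ Z u₂ b, (G.degree v : ℝ) :=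
        Finset.sum_nonneg fun v _ => (hdpos v).le
      linarith
    calc ∑ v ∈ Z u₁ b ∪ Z u₂ b, (G.degree v : ℝ)
        ≤ ∑ v ∈ Z u₁ b, (G.degree v : ℝ) + ∑ v ∈ Z u₂ b, (G.degree v : ℝ) := h1
      _ ≤ ((t₀:ℝ) + 1) / (2 * ε b) + ((t₀:ℝ) + 1) / (2 * ε b) :=
          add_le_add (hZvol u₁ b) (hZvol u₂ b)
      _ = ((t₀:ℝ) + 1) / ε b := by
          have h0 : ε b ≠ 0 := (hεpos b).ne'
          field_simp
          ring
  -- final computation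
  have hA : ∀ i : ℕ, (0:ℝ) < ((2:ℝ) ^ i)⁻¹ := fun i => by positivity
  have h2ℓ : ((2:ℝ) ^ ℓ)⁻¹ ≤ 1 / 2 := by
    have h2 : (2:ℝ) ≤ 2 ^ ℓ := by
      calc (2:ℝ) = 2 ^ 1 := (pow_one 2).symm
        _ ≤ 2 ^ ℓ := pow_le_pow_right₀ one_le_two hℓ1
    rw [inv_le_comm₀ (by positivity) (by norm_num)]
    linarith
  have hden : (0:ℝ) < 1 - ((2:ℝ) ^ ℓ)⁻¹ := by linarith
  set C := 112 * ((t₀:ℝ) + 1) * t₀ * L / (φ * Vol) with hC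
  have hterm : ∀ i ∈ Finset.Icc 1 ℓ,
      (((2 : ℝ) ^ i)⁻¹ / (1 - ((2 : ℝ) ^ ℓ)⁻¹)) *
        ((∑ v ∈ Z u₁ i ∪ Z u₂ i, (G.degree v : ℝ)) / Vol) ≤ C := by
    intro i _
    set S := ∑ v ∈ Z u₁ i ∪ Z u₂ i, (G.degree v : ℝ) with hS
    have hSnn : 0 ≤ S := Finset.sum_nonneg fun v _ => (hdpos v).le
    have h1 : ((2:ℝ) ^ i)⁻¹ / (1 - ((2:ℝ) ^ ℓ)⁻¹) ≤ 2 * ((2:ℝ) ^ i)⁻¹ := by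
      rw [div_le_iff₀ hden]
      nlinarith [hA i]
    calc (((2 : ℝ) ^ i)⁻¹ / (1 - ((2 : ℝ) ^ ℓ)⁻¹)) * (S / Vol)
        ≤ (2 * ((2:ℝ) ^ i)⁻¹) * (S / Vol) :=
          mul_le_mul_of_nonneg_right h1 (div_nonneg hSnn hVol.le)
      _ ≤ (2 * ((2:ℝ) ^ i)⁻¹) * ((((t₀:ℝ) + 1) / ε i) / Vol) := by
          apply mul_le_mul_of_nonneg_left _ (by positivity)
          exact (div_le_div_iff_of_pos_right hVol).mpr (hUvol i)
      _ = C := by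
          rw [hC, hε]
          have h2i : ((2:ℝ) ^ i) ≠ 0 := by positivity
          field_simp
          ring
  calc ∑ i ∈ Finset.Icc 1 ℓ,
        (((2 : ℝ) ^ i)⁻¹ / (1 - ((2 : ℝ) ^ ℓ)⁻¹)) *
          ((∑ v ∈ Z u₁ i ∪ Z u₂ i, (G.degree v : ℝ)) / Vol)
      ≤ ∑ i ∈ Finset.Icc 1 ℓ, C := Finset.sum_le_sum hterm
    _ = (ℓ:ℝ) * C := by
        rw [Finset.sum_const, Nat.card_Icc]
        simp
    _ = 112 * ℓ * ((t₀ : ℝ) + 1) * t₀ * L / (φ * Vol) := by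
        rw [hC]; ring
end
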